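/- Let 1 ≤ N ≤ n, set ε = 1, and let q = (q_1,…,q_{n+1}) : ℝ → ℝ^{n+1} be smooth; write q̄ = (q_1,…,q_n). Then the Euler–Lagrange expressions of the purely kinetic Lagrangians satisfy, pointwise on ℝ: E_N(L^{n,−N,0})[q̄] = E_{N+1}(L^{n+1,−N,0})[q] + ½ (q_{n+1})_{xx}, and E_i(L^{n,−N,0})[q̄] = E_{i+1}(L^{n+1,−N,0})[q] for every i = N+1,…,n. -/

import Mathlib

noncomputable section

/-- Benenti potentials `V_i^{(k)}` for `k ≥ 0`: `Vpos n q k i = V_i^{(k)}(q)` (`i` 1-based),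
with `V_i^{(0)} = δ_{i n}` and `V_i^{(k+1)} = V_{i+1}^{(k)} - q_i V_1^{(k)}`, `V_{n+1}^{(k)} := 0`. -/
def Vpos (n : ℕ) (q : ℕ → ℝ) : ℕ → ℕ → ℝ
  | 0, i => if i = n then 1 else 0
  | k + 1, i => (if i = n then 0 else Vpos n q k (i + 1)) - q i * Vpos n q k 1

/-- Benenti potentials for negative superscripts: `Vneg n q j r = V_r^{(-j)}(q)`, via the
backward recursion `V_r^{(k)} = V_{r-1}^{(k+1)} - (q_{r-1}/q_n) V_n^{(k+1)}`, with
`V_0 := 0` and `q_0 := 1`. -/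
def Vneg (n : ℕ) (q : ℕ → ℝ) : ℕ → ℕ → ℝ
  | 0, r => if r = n then 1 else 0
  | j + 1, r =>
      (if r = 1 then 0 else Vneg n q j (r - 1)) -
        (if r = 1 then 1 else q (r - 1)) / q n * Vneg n q j n

/-- Benenti potential `V_i^{(k)}(q)` for `k : ℤ`, `i` 1-based. -/
def benenti (n : ℕ) (q : ℕ → ℝ) (k : ℤ) (i : ℕ) : ℝ :=
  if 0 ≤ k then Vpos n q k.toNat i else Vneg n q (-k).toNat i

/-- Reindex a vector of `ℝ^n` as a 1-based `ℕ`-indexed family (zero outside `1..n`). -/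
def extQ (n : ℕ) (Q : Fin n → ℝ) : ℕ → ℝ := fun a =>
  if h : 1 ≤ a ∧ a ≤ n then Q ⟨a - 1, by omega⟩ else 0

/-- The Stäckel Lagrangian `L^{n,m,k}(q,q_x) = ¼ ∑_{i,j} V_1^{(2n-m-i-j)}(q) q_{i,x} q_{j,x}
- (ε/4) V_1^{(k)}(q)` (indices 1-based). -/
def Lag (n : ℕ) (m k : ℤ) (ε : ℝ) (Q Qx : Fin n → ℝ) : ℝ :=
  (1 / 4) * ∑ i : Fin n, ∑ j : Fin n,
      benenti n (extQ n Q) (2 * (n : ℤ) - m - (((i : ℕ) : ℤ) + 1) - (((j : ℕ) : ℤ) + 1)) 1 *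
        Qx i * Qx j -
    ε / 4 * benenti n (extQ n Q) k 1

/-- Euler–Lagrange expression `E_i(L)[c](x) = (∂L/∂q_i)(c x, c_x x) - d/dx [(∂L/∂q_{i,x})(c x, c_x x)]`
along a curve `c : ℝ → ℝⁿ`. -/
def EL (n : ℕ) (L : (Fin n → ℝ) → (Fin n → ℝ) → ℝ) (c : ℝ → Fin n → ℝ) (i : Fin n)
    (x : ℝ) : ℝ :=
  fderiv ℝ (fun Q => L Q (deriv c x)) (c x) (Pi.single i 1) -
    deriv (fun y => fderiv ℝ (fun V => L (c y) V) (deriv c y) (Pi.single i 1)) x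

/- auxiliary -/
def Wd (M : ℕ) (q : ℕ → ℝ) : ℕ → ℕ → ℕ → ℝ
  | 0, _, _ => 0
  | k + 1, i, e => (if i = M then 0 else Wd M q k (i + 1) e)
      - (if i = e then Vpos M q k 1 else 0) - q i * Wd M q k 1 e

lemma Vpos_zero (M : ℕ) (q : ℕ → ℝ) (i : ℕ) : Vpos M q 0 i = if i = M then 1 else 0 := rfl

lemma Vpos_succ (M : ℕ) (q : ℕ → ℝ) (k i : ℕ) :
    Vpos M q (k + 1) i = (if i = M then 0 else Vpos M q k (i + 1)) - q i * Vpos M q k 1 := rfl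

lemma Wd_zero_eq (M : ℕ) (q : ℕ → ℝ) (i e : ℕ) : Wd M q 0 i e = 0 := rfl

lemma Wd_succ (M : ℕ) (q : ℕ → ℝ) (k i e : ℕ) :
    Wd M q (k + 1) i e = (if i = M then 0 else Wd M q k (i + 1) e)
      - (if i = e then Vpos M q k 1 else 0) - q i * Wd M q k 1 e := rfl

lemma Vpos_congr (M : ℕ) (q q' : ℕ → ℝ) (h : ∀ a, 1 ≤ a → a ≤ M → q a = q' a) :
    ∀ k i, 1 ≤ i → i ≤ M → Vpos M q k i = Vpos M q' k i := by
  intro k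
  induction k with
  | zero => intro i _ _; rfl
  | succ k ih =>
    intro i h1 h2
    rw [Vpos_succ, Vpos_succ, ih 1 le_rfl (le_trans h1 h2), h i h1 h2]
    by_cases hi : i = M
    · simp [hi]
    · rw [if_neg hi, if_neg hi, ih (i + 1) (by omega) (by omega)]

lemma Wd_congr (M : ℕ) (q q' : ℕ → ℝ) (e : ℕ) (h : ∀ a, 1 ≤ a → a ≤ M → q a = q' a) :
    ∀ k i, 1 ≤ i → i ≤ M → Wd M q k i e = Wd M q' k i e := by
  intro k
  induction k with
  | zero => intro i _ _; rfl
  | succ k ih =>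
    intro i h1 h2
    rw [Wd_succ, Wd_succ, ih 1 le_rfl (le_trans h1 h2), h i h1 h2,
      Vpos_congr M q q' h k 1 le_rfl (le_trans h1 h2)]
    by_cases hi : i = M
    · simp [hi]
    · rw [if_neg hi, if_neg hi, ih (i + 1) (by omega) (by omega)]

lemma Vpos_small (M : ℕ) (q : ℕ → ℝ) :
    ∀ k, k < M → ∀ i, Vpos M q k i = if i = M - k then 1 else 0 := by
  intro k
  induction k with
  | zero => intro _ i; rfl
  | succ k ih =>
    intro hk i
    rw [Vpos_succ, ih (by omega) (i + 1), ih (by omega) 1]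
    split_ifs <;> first | ring1 | (exfalso; omega)

lemma Vpos_bridge (M : ℕ) (q : ℕ → ℝ) (hM : 1 ≤ M) :
    ∀ k i, 1 ≤ i → i ≤ M → k + i ≤ 2 * M → Vpos (M + 1) q (k + 1) i = Vpos M q k i := by
  intro k
  induction k with
  | zero =>
    intro i h1 h2 _
    rw [Vpos_succ, Vpos_zero, Vpos_zero, Vpos_zero]
    split_ifs <;> first | ring1 | (exfalso; omega)
  | succ k ih =>
    intro i h1 h2 hk
    have hone : Vpos (M + 1) q (k + 1) 1 = Vpos M q k 1 := ih 1 le_rfl hM (by omega)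
    rw [Vpos_succ (M + 1) q (k + 1) i, Vpos_succ M q k i, hone]
    by_cases hi : i = M
    · rw [if_neg (by omega), if_pos hi, hi,
        Vpos_small (M + 1) q (k + 1) (by omega) (M + 1), if_neg (by omega)]
    · rw [if_neg (by omega), if_neg hi, ih (i + 1) (by omega) (by omega) (by omega)]

lemma Wd_vanish (M : ℕ) (q : ℕ → ℝ) (e : ℕ) :
    ∀ k i, 1 ≤ i → i ≤ M → k + i < M + e → Wd M q k i e = 0 := by
  intro k
  induction k with
  | zero => intro i _ _ _; rfl
  | succ k ih =>
    intro i h1 h2 hk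
    rw [Wd_succ, ih 1 le_rfl (le_trans h1 h2) (by omega)]
    have hd : (if i = e then Vpos M q k 1 else 0) = 0 := by
      by_cases hie : i = e
      · rw [if_pos hie, Vpos_small M q k (by omega) 1, if_neg (by omega)]
      · rw [if_neg hie]
    rw [hd]
    by_cases hi : i = M
    · rw [if_pos hi]; ring
    · rw [if_neg hi, ih (i + 1) (by omega) (by omega) (by omega)]; ring

lemma Wd_shift (M : ℕ) (q : ℕ → ℝ) (e : ℕ) (he1 : 1 ≤ e) (he2 : e < M) :
    ∀ k i, Wd M q (k + 1) i (e + 1) = Wd M q k i e - (if i = e + 1 then Vpos M q k 1 else 0) := by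
  intro k
  induction k with
  | zero =>
    intro i
    rw [Wd_succ, Wd_zero_eq, Wd_zero_eq, Wd_zero_eq]
    split_ifs <;> ring1
  | succ k ih =>
    intro i
    rw [Wd_succ M q (k + 1) i (e + 1), ih (i + 1), ih 1, Wd_succ M q k i e]
    split_ifs <;> first | ring1 | (exfalso; omega)

lemma Wd_bridge (M : ℕ) (q : ℕ → ℝ) (hM : 1 ≤ M) (e : ℕ) (he2 : e ≤ M) :
    ∀ k i, 1 ≤ i → i ≤ M → k + i ≤ 2 * M + e → Wd (M + 1) q (k + 1) i e = Wd M q k i e := by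
  intro k
  induction k with
  | zero =>
    intro i h1 h2 _
    rw [Wd_succ, Wd_zero_eq, Wd_zero_eq, Wd_zero_eq, Vpos_zero]
    split_ifs <;> first | ring1 | (exfalso; omega)
  | succ k ih =>
    intro i h1 h2 hk
    have hone : Wd (M + 1) q (k + 1) 1 e = Wd M q k 1 e := ih 1 le_rfl hM (by omega)
    have hd : (if i = e then Vpos (M + 1) q (k + 1) 1 else 0)
        = (if i = e then Vpos M q k 1 else 0) := by
      by_cases hie : i = e
      · rw [if_pos hie, if_pos hie, Vpos_bridge M q hM k 1 le_rfl hM (by omega)]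
      · rw [if_neg hie, if_neg hie]
    rw [Wd_succ (M + 1) q (k + 1) i e, Wd_succ M q k i e, hone, hd]
    by_cases hi : i = M
    · have hke : k + 1 < (M + 1) + e := by omega
      have htop : Wd (M + 1) q (k + 1) (M + 1) e = 0 := by
        rw [Wd_succ, Wd_vanish (M + 1) q e k 1 le_rfl (by omega) hke]
        split_ifs <;> first | ring1 | (exfalso; omega)
      rw [if_neg (by omega), if_pos hi, hi, htop]
    · rw [if_neg (by omega), if_neg hi, ih (i + 1) (by omega) (by omega) (by omega)]

noncomputable def EXmap (M i : ℕ) : (Fin M → ℝ) →L[ℝ] ℝ :=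
  if h : 1 ≤ i ∧ i ≤ M then ContinuousLinearMap.proj ⟨i - 1, by omega⟩ else 0

lemma hasFDerivAt_extQ (M i : ℕ) (P : Fin M → ℝ) :
    HasFDerivAt (fun Q : Fin M → ℝ => extQ M Q i) (EXmap M i) P := by
  unfold EXmap
  split
  · next h =>
    have : (fun Q : Fin M → ℝ => extQ M Q i) = fun Q => Q ⟨i - 1, by omega⟩ := by
      funext Q; simp only [extQ, dif_pos h]
    rw [this]
    exact (ContinuousLinearMap.proj (R := ℝ) (φ := fun _ : Fin M => ℝ)
      ⟨i - 1, by omega⟩).hasFDerivAt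
  · next h =>
    have : (fun Q : Fin M → ℝ => extQ M Q i) = fun _ => (0 : ℝ) := by
      funext Q; simp only [extQ, dif_neg h]
    rw [this]
    exact hasFDerivAt_const 0 P

noncomputable def VD (M : ℕ) (P : Fin M → ℝ) : ℕ → ℕ → (Fin M → ℝ) →L[ℝ] ℝ
  | 0, _ => 0
  | k + 1, i => (if i = M then 0 else VD M P k (i + 1))
      - (extQ M P i • VD M P k 1 + Vpos M (extQ M P) k 1 • EXmap M i)

lemma hasFDerivAt_Vpos (M : ℕ) :
    ∀ (k i : ℕ) (P : Fin M → ℝ),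
      HasFDerivAt (fun Q : Fin M → ℝ => Vpos M (extQ M Q) k i) (VD M P k i) P := by
  intro k
  induction k with
  | zero =>
    intro i P
    show HasFDerivAt (fun Q : Fin M → ℝ => if i = M then (1:ℝ) else 0) (VD M P 0 i) P
    show HasFDerivAt _ (0 : (Fin M → ℝ) →L[ℝ] ℝ) P
    exact hasFDerivAt_const _ P
  | succ k ih =>
    intro i P
    have h1 : HasFDerivAt (fun Q : Fin M → ℝ => if i = M then (0:ℝ)
        else Vpos M (extQ M Q) k (i + 1)) (if i = M then 0 else VD M P k (i + 1)) P := by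
      split
      · exact hasFDerivAt_const _ P
      · exact ih (i + 1) P
    have h2 : HasFDerivAt (fun Q : Fin M → ℝ => extQ M Q i * Vpos M (extQ M Q) k 1)
        (extQ M P i • VD M P k 1 + Vpos M (extQ M P) k 1 • EXmap M i) P :=
      (hasFDerivAt_extQ M i P).mul (ih 1 P)
    exact (h1.sub h2)

lemma EXmap_single (M i : ℕ) (E : Fin M) :
    EXmap M i (Pi.single E 1) = if i = (E : ℕ) + 1 then 1 else 0 := by
  have hE := E.isLt
  unfold EXmap
  split
  · next h =>
    rw [ContinuousLinearMap.proj_apply, Pi.single_apply]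
    by_cases hie : i = (E : ℕ) + 1
    · rw [if_pos hie, if_pos (by apply Fin.ext; simp; omega)]
    · rw [if_neg hie, if_neg]
      intro hc
      apply hie
      have h2 : i - 1 = (E : ℕ) := congrArg Fin.val hc
      omega
  · next h =>
    rw [ContinuousLinearMap.zero_apply, if_neg (by omega)]

lemma VD_single (M : ℕ) :
    ∀ (k i : ℕ) (P : Fin M → ℝ) (E : Fin M),
      VD M P k i (Pi.single E 1) = Wd M (extQ M P) k i ((E : ℕ) + 1) := by
  intro k
  induction k with
  | zero => intro i P E; show (0 : (Fin M → ℝ) →L[ℝ] ℝ) (Pi.single E 1) = 0; rfl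
  | succ k ih =>
    intro i P E
    show ((if i = M then 0 else VD M P k (i + 1))
      - (extQ M P i • VD M P k 1 + Vpos M (extQ M P) k 1 • EXmap M i)) (Pi.single E 1) = _
    rw [ContinuousLinearMap.sub_apply, ContinuousLinearMap.add_apply,
      ContinuousLinearMap.smul_apply, ContinuousLinearMap.smul_apply,
      ih 1 P E, EXmap_single, Wd_succ]
    have hif : (if i = M then (0 : (Fin M → ℝ) →L[ℝ] ℝ) else VD M P k (i + 1)) (Pi.single E 1)
        = (if i = M then (0:ℝ) else Wd M (extQ M P) k (i + 1) ((E : ℕ) + 1)) := by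
      split
      · rfl
      · exact ih (i + 1) P E
    rw [hif]
    simp only [smul_eq_mul, mul_ite, mul_one, mul_zero]
    split_ifs <;> ring1

lemma VD_apply (M : ℕ) (k i : ℕ) (P : Fin M → ℝ) (v : Fin M → ℝ) :
    VD M P k i v = ∑ e : Fin M, Wd M (extQ M P) k i ((e : ℕ) + 1) * v e := by
  have h := LinearMap.pi_apply_eq_sum_univ (VD M P k i : (Fin M → ℝ) →ₗ[ℝ] ℝ) v
  rw [ContinuousLinearMap.coe_coe] at h
  rw [h]
  apply Finset.sum_congr rfl
  intro e _
  have : (fun j => if e = j then (1:ℝ) else 0) = Pi.single e 1 := by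
    funext j; rw [Pi.single_apply]; by_cases hej : e = j
    · rw [if_pos hej, if_pos hej.symm]
    · rw [if_neg hej, if_neg (fun hc => hej hc.symm)]
  rw [this, VD_single, smul_eq_mul, mul_comm]


def ksup (M NN a b : ℕ) : ℕ := 2 * M + NN - 2 - (a + b)

lemma ksup_comm (M NN a b : ℕ) : ksup M NN a b = ksup M NN b a := by
  unfold ksup; omega

lemma Lag_eq (M NN : ℕ) (hM : 1 ≤ M) (Q V : Fin M → ℝ) :
    Lag M (-(NN : ℤ)) 0 1 Q V
      = 1/4 * ∑ i : Fin M, ∑ j : Fin M,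
          Vpos M (extQ M Q) (ksup M NN (i : ℕ) (j : ℕ)) 1 * V i * V j
        - 1/4 * (if 1 = M then 1 else 0) := by
  unfold Lag
  have hben : ∀ i j : Fin M,
      benenti M (extQ M Q) (2 * (M : ℤ) - (-(NN : ℤ)) - (((i : ℕ) : ℤ) + 1) - (((j : ℕ) : ℤ) + 1)) 1
        = Vpos M (extQ M Q) (ksup M NN (i : ℕ) (j : ℕ)) 1 := by
    intro i j
    have hi := i.isLt
    have hj := j.isLt
    rw [benenti, if_pos (by omega)]
    congr 1
    unfold ksup
    omega
  have hpot : benenti M (extQ M Q) 0 1 = (if 1 = M then (1:ℝ) else 0) := by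
    rw [benenti, if_pos le_rfl]
    rfl
  rw [hpot]
  have : ∀ i j : Fin M,
      benenti M (extQ M Q) (2 * (M : ℤ) - (-(NN : ℤ)) - (((i : ℕ) : ℤ) + 1) - (((j : ℕ) : ℤ) + 1)) 1
          * V i * V j
        = Vpos M (extQ M Q) (ksup M NN (i : ℕ) (j : ℕ)) 1 * V i * V j := by
    intro i j; rw [hben]
  rw [Finset.sum_congr rfl fun i _ => Finset.sum_congr rfl fun j _ => this i j]

lemma fderiv_Lag_Q (M NN : ℕ) (hM : 1 ≤ M) (V₀ P : Fin M → ℝ) (E : Fin M) :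
    fderiv ℝ (fun Q => Lag M (-(NN : ℤ)) 0 1 Q V₀) P (Pi.single E 1)
      = 1/4 * ∑ i : Fin M, ∑ j : Fin M,
          Wd M (extQ M P) (ksup M NN (i : ℕ) (j : ℕ)) 1 ((E : ℕ) + 1) * V₀ i * V₀ j := by
  have hfun : (fun Q => Lag M (-(NN : ℤ)) 0 1 Q V₀)
      = fun Q => 1/4 * ∑ i : Fin M, ∑ j : Fin M,
          Vpos M (extQ M Q) (ksup M NN (i : ℕ) (j : ℕ)) 1 * V₀ i * V₀ j
        - 1/4 * (if 1 = M then 1 else 0) := funext fun Q => Lag_eq M NN hM Q V₀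
  have hD : HasFDerivAt (fun Q => Lag M (-(NN : ℤ)) 0 1 Q V₀)
      ((1/4 : ℝ) • (∑ i : Fin M, ∑ j : Fin M,
        (V₀ j) • ((V₀ i) • VD M P (ksup M NN (i : ℕ) (j : ℕ)) 1))) P := by
    rw [hfun]
    exact ((HasFDerivAt.fun_sum fun (i : Fin M) _ => HasFDerivAt.fun_sum fun (j : Fin M) _ =>
      ((hasFDerivAt_Vpos M (ksup M NN (i : ℕ) (j : ℕ)) 1 P).mul_const (V₀ i)).mul_const
        (V₀ j)).const_mul (1/4)).sub_const _
  rw [hD.fderiv]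
  rw [ContinuousLinearMap.smul_apply, ContinuousLinearMap.sum_apply]
  simp only [ContinuousLinearMap.sum_apply, ContinuousLinearMap.smul_apply, VD_single,
    smul_eq_mul]
  refine congrArg (fun t => 1/4 * t) ?_
  refine Finset.sum_congr rfl fun i _ => Finset.sum_congr rfl fun j _ => by ring

lemma fderiv_Lag_V (M NN : ℕ) (hM : 1 ≤ M) (P U : Fin M → ℝ) (E : Fin M) :
    fderiv ℝ (fun V => Lag M (-(NN : ℤ)) 0 1 P V) U (Pi.single E 1)
      = 1/2 * ∑ j : Fin M, Vpos M (extQ M P) (ksup M NN (E : ℕ) (j : ℕ)) 1 * U j := by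
  have hfun : (fun V => Lag M (-(NN : ℤ)) 0 1 P V)
      = fun V => 1/4 * ∑ i : Fin M, ∑ j : Fin M,
          Vpos M (extQ M P) (ksup M NN (i : ℕ) (j : ℕ)) 1 * V i * V j
        - 1/4 * (if 1 = M then 1 else 0) := funext fun V => Lag_eq M NN hM P V
  have hD : HasFDerivAt (fun V => Lag M (-(NN : ℤ)) 0 1 P V)
      ((1/4 : ℝ) • (∑ i : Fin M, ∑ j : Fin M,
        ((Vpos M (extQ M P) (ksup M NN (i : ℕ) (j : ℕ)) 1 * U i) •
            (ContinuousLinearMap.proj j : (Fin M → ℝ) →L[ℝ] ℝ)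
          + (U j) • ((Vpos M (extQ M P) (ksup M NN (i : ℕ) (j : ℕ)) 1) •
            (ContinuousLinearMap.proj i : (Fin M → ℝ) →L[ℝ] ℝ))))) U := by
    rw [hfun]
    refine HasFDerivAt.sub_const _ (HasFDerivAt.const_mul (HasFDerivAt.fun_sum fun (i : Fin M) _ =>
      HasFDerivAt.fun_sum fun (j : Fin M) _ => ?_) (1/4))
    exact HasFDerivAt.mul
      (((ContinuousLinearMap.proj (R := ℝ) (φ := fun _ : Fin M => ℝ) i).hasFDerivAt).const_mul
        (Vpos M (extQ M P) (ksup M NN (i : ℕ) (j : ℕ)) 1))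
      ((ContinuousLinearMap.proj (R := ℝ) (φ := fun _ : Fin M => ℝ) j).hasFDerivAt)
  rw [hD.fderiv]
  simp only [ContinuousLinearMap.smul_apply, ContinuousLinearMap.sum_apply,
    ContinuousLinearMap.add_apply, ContinuousLinearMap.proj_apply, smul_eq_mul,
    Pi.single_apply, mul_ite, mul_one, mul_zero, ite_mul, zero_mul]
  rw [Finset.sum_congr rfl fun i (_ : i ∈ Finset.univ) => Finset.sum_add_distrib,
    Finset.sum_add_distrib]
  have h1 : ∑ i : Fin M, ∑ j : Fin M,
      (if j = E then Vpos M (extQ M P) (ksup M NN (i : ℕ) (j : ℕ)) 1 * U i else 0)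
      = ∑ i : Fin M, Vpos M (extQ M P) (ksup M NN (i : ℕ) (E : ℕ)) 1 * U i := by
    apply Finset.sum_congr rfl; intro i _
    rw [Finset.sum_ite_eq' Finset.univ E
      (fun j => Vpos M (extQ M P) (ksup M NN (i : ℕ) (j : ℕ)) 1 * U i),
      if_pos (Finset.mem_univ E)]
  have h2 : ∑ i : Fin M, ∑ j : Fin M,
      (if i = E then U j * Vpos M (extQ M P) (ksup M NN (i : ℕ) (j : ℕ)) 1 else 0)
      = ∑ j : Fin M, U j * Vpos M (extQ M P) (ksup M NN (E : ℕ) (j : ℕ)) 1 := by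
    rw [Finset.sum_comm]
    apply Finset.sum_congr rfl; intro j _
    rw [Finset.sum_ite_eq' Finset.univ E
      (fun i => U j * Vpos M (extQ M P) (ksup M NN (i : ℕ) (j : ℕ)) 1),
      if_pos (Finset.mem_univ E)]
  rw [h1, h2]
  have h3 : ∑ i : Fin M, Vpos M (extQ M P) (ksup M NN (i : ℕ) (E : ℕ)) 1 * U i
      = ∑ j : Fin M, Vpos M (extQ M P) (ksup M NN (E : ℕ) (j : ℕ)) 1 * U j := by
    apply Finset.sum_congr rfl; intro i _
    rw [ksup_comm]
  have h4 : ∑ j : Fin M, U j * Vpos M (extQ M P) (ksup M NN (E : ℕ) (j : ℕ)) 1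
      = ∑ j : Fin M, Vpos M (extQ M P) (ksup M NN (E : ℕ) (j : ℕ)) 1 * U j := by
    apply Finset.sum_congr rfl; intro j _
    ring
  rw [h3, h4]
  ring

lemma EL_formula (M NN : ℕ) (hM : 1 ≤ M) (c : ℝ → Fin M → ℝ) (hc : ContDiff ℝ (⊤ : ℕ∞) c)
    (E : Fin M) (x : ℝ) :
    EL M (Lag M (-(NN : ℤ)) 0 1) c E x =
      1/4 * ∑ i : Fin M, ∑ j : Fin M,
          Wd M (extQ M (c x)) (ksup M NN (i : ℕ) (j : ℕ)) 1 ((E : ℕ) + 1)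
            * deriv c x i * deriv c x j
      - 1/2 * ∑ j : Fin M,
          ((∑ l : Fin M, Wd M (extQ M (c x)) (ksup M NN (E : ℕ) (j : ℕ)) 1 ((l : ℕ) + 1)
              * deriv c x l) * deriv c x j
            + Vpos M (extQ M (c x)) (ksup M NN (E : ℕ) (j : ℕ)) 1
              * deriv (fun y => deriv c y j) x) := by
  have hcd : Differentiable ℝ c := hc.differentiable (by simp)
  have hder : ∀ y, HasDerivAt c (deriv c y) y := fun y => (hcd y).hasDerivAt
  have hdc : ContDiff ℝ (⊤ : ℕ∞) (deriv c) := (contDiff_infty_iff_deriv.mp hc).2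
  have hdcj : ∀ j : Fin M, DifferentiableAt ℝ (fun y => deriv c y j) x := fun j =>
    (differentiable_pi.mp (hdc.differentiable (by simp)) j) x
  unfold EL
  rw [fderiv_Lag_Q M NN hM (deriv c x) (c x) E]
  have hfun : (fun y => fderiv ℝ (fun V => Lag M (-(NN : ℤ)) 0 1 (c y) V) (deriv c y)
        (Pi.single E 1))
      = fun y => 1/2 * ∑ j : Fin M,
          Vpos M (extQ M (c y)) (ksup M NN (E : ℕ) (j : ℕ)) 1 * deriv c y j :=
    funext fun y => fderiv_Lag_V M NN hM (c y) (deriv c y) E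
  rw [hfun]
  have hVy : ∀ k : ℕ, HasDerivAt (fun y => Vpos M (extQ M (c y)) k 1)
      (VD M (c x) k 1 (deriv c x)) x := fun k =>
    (hasFDerivAt_Vpos M k 1 (c x)).comp_hasDerivAt x (hder x)
  have huj : ∀ j : Fin M, HasDerivAt (fun y => deriv c y j)
      (deriv (fun y => deriv c y j) x) x := fun j => (hdcj j).hasDerivAt
  have H : HasDerivAt (fun y => 1/2 * ∑ j : Fin M,
      Vpos M (extQ M (c y)) (ksup M NN (E : ℕ) (j : ℕ)) 1 * deriv c y j)
      (1/2 * ∑ j : Fin M,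
        (VD M (c x) (ksup M NN (E : ℕ) (j : ℕ)) 1 (deriv c x) * deriv c x j
          + Vpos M (extQ M (c x)) (ksup M NN (E : ℕ) (j : ℕ)) 1
            * deriv (fun y => deriv c y j) x)) x :=
    HasDerivAt.const_mul (1/2 : ℝ) (HasDerivAt.fun_sum fun (j : Fin M) _ =>
      (hVy (ksup M NN (E : ℕ) (j : ℕ))).mul (huj j))
  rw [H.deriv]
  have hVD : ∀ j : Fin M, VD M (c x) (ksup M NN (E : ℕ) (j : ℕ)) 1 (deriv c x)
      = ∑ l : Fin M, Wd M (extQ M (c x)) (ksup M NN (E : ℕ) (j : ℕ)) 1 ((l : ℕ) + 1)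
          * deriv c x l := fun j => VD_apply M _ 1 (c x) (deriv c x)
  have hsum : ∑ j : Fin M,
      (VD M (c x) (ksup M NN (E : ℕ) (j : ℕ)) 1 (deriv c x) * deriv c x j
        + Vpos M (extQ M (c x)) (ksup M NN (E : ℕ) (j : ℕ)) 1
          * deriv (fun y => deriv c y j) x)
      = ∑ j : Fin M,
      ((∑ l : Fin M, Wd M (extQ M (c x)) (ksup M NN (E : ℕ) (j : ℕ)) 1 ((l : ℕ) + 1)
          * deriv c x l) * deriv c x j
        + Vpos M (extQ M (c x)) (ksup M NN (E : ℕ) (j : ℕ)) 1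
          * deriv (fun y => deriv c y j) x) :=
    Finset.sum_congr rfl fun j _ => by rw [hVD j]
  rw [hsum]

lemma master_alg (n N : ℕ) (hN : 1 ≤ N) (hNn : N ≤ n) (e : ℕ) (he1 : N ≤ e) (he2 : e ≤ n)
    (Q' : ℕ → ℝ) (u w : Fin (n + 1) → ℝ) :
    1/4 * ∑ i : Fin n, ∑ j : Fin n,
        Wd n Q' (ksup n N (i : ℕ) (j : ℕ)) 1 (e - 1 + 1) * u i.castSucc * u j.castSucc
      - 1/2 * ∑ j : Fin n,
        ((∑ l : Fin n, Wd n Q' (ksup n N (e - 1) (j : ℕ)) 1 ((l : ℕ) + 1) * u l.castSucc)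
            * u j.castSucc
          + Vpos n Q' (ksup n N (e - 1) (j : ℕ)) 1 * w j.castSucc)
    =
    (1/4 * ∑ i : Fin (n + 1), ∑ j : Fin (n + 1),
        Wd (n + 1) Q' (ksup (n + 1) N (i : ℕ) (j : ℕ)) 1 (e + 1) * u i * u j
      - 1/2 * ∑ j : Fin (n + 1),
        ((∑ l : Fin (n + 1), Wd (n + 1) Q' (ksup (n + 1) N e (j : ℕ)) 1 ((l : ℕ) + 1) * u l)
            * u j
          + Vpos (n + 1) Q' (ksup (n + 1) N e (j : ℕ)) 1 * w j))
    + (if e = N then 1/2 * w (Fin.last n) else 0) := by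
  have hee : e - 1 + 1 = e := by omega
  rw [hee]
  have hA : ∑ i : Fin (n + 1), ∑ j : Fin (n + 1),
      Wd (n + 1) Q' (ksup (n + 1) N (i : ℕ) (j : ℕ)) 1 (e + 1) * u i * u j
      = ∑ i : Fin n, ∑ j : Fin n,
          Wd n Q' (ksup n N (i : ℕ) (j : ℕ)) 1 e * u i.castSucc * u j.castSucc := by
    rw [Fin.sum_univ_castSucc]
    have hlastrow : ∑ j : Fin (n + 1),
        Wd (n + 1) Q' (ksup (n + 1) N ((Fin.last n : Fin (n+1)) : ℕ) (j : ℕ)) 1 (e + 1)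
          * u (Fin.last n) * u j = 0 := by
      refine Finset.sum_eq_zero fun j _ => ?_
      have hj := j.isLt
      rw [Wd_vanish (n + 1) Q' (e + 1) _ 1 le_rfl (by omega)
        (by simp only [Fin.val_last]; unfold ksup; omega)]
      ring
    rw [hlastrow, add_zero]
    refine Finset.sum_congr rfl fun i _ => ?_
    rw [Fin.sum_univ_castSucc]
    have hi := i.isLt
    have hlastcol : Wd (n + 1) Q'
        (ksup (n + 1) N ((i.castSucc : Fin (n+1)) : ℕ) ((Fin.last n : Fin (n+1)) : ℕ)) 1 (e + 1)
          * u i.castSucc * u (Fin.last n) = 0 := by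
      rw [Wd_vanish (n + 1) Q' (e + 1) _ 1 le_rfl (by omega)
        (by simp only [Fin.val_last, Fin.coe_castSucc]; unfold ksup; omega)]
      ring
    rw [hlastcol, add_zero]
    refine Finset.sum_congr rfl fun j _ => ?_
    have hj := j.isLt
    have hsup : ksup (n + 1) N ((i.castSucc : Fin (n+1)) : ℕ) ((j.castSucc : Fin (n+1)) : ℕ)
        = (ksup n N (i : ℕ) (j : ℕ) + 1) + 1 := by
      simp only [Fin.coe_castSucc]; unfold ksup; omega
    rw [hsup, Wd_shift (n + 1) Q' e (by omega) (by omega) (ksup n N (i : ℕ) (j : ℕ) + 1) 1,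
      if_neg (by omega),
      Wd_bridge n Q' (by omega) e (by omega) (ksup n N (i : ℕ) (j : ℕ)) 1 le_rfl (by omega)
        (by unfold ksup; omega)]
    ring
  have hB : ∑ j : Fin (n + 1),
      ((∑ l : Fin (n + 1), Wd (n + 1) Q' (ksup (n + 1) N e (j : ℕ)) 1 ((l : ℕ) + 1) * u l) * u j
        + Vpos (n + 1) Q' (ksup (n + 1) N e (j : ℕ)) 1 * w j)
      = (∑ j : Fin n,
        ((∑ l : Fin n, Wd n Q' (ksup n N (e - 1) (j : ℕ)) 1 ((l : ℕ) + 1) * u l.castSucc)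
            * u j.castSucc
          + Vpos n Q' (ksup n N (e - 1) (j : ℕ)) 1 * w j.castSucc))
        + (if e = N then 1 else 0) * w (Fin.last n) := by
    rw [Fin.sum_univ_castSucc]
    have hlast : (∑ l : Fin (n + 1),
          Wd (n + 1) Q' (ksup (n + 1) N e ((Fin.last n : Fin (n+1)) : ℕ)) 1 ((l : ℕ) + 1) * u l)
            * u (Fin.last n)
        + Vpos (n + 1) Q' (ksup (n + 1) N e ((Fin.last n : Fin (n+1)) : ℕ)) 1 * w (Fin.last n)
        = (if e = N then 1 else 0) * w (Fin.last n) := by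
      have hz : ∑ l : Fin (n + 1),
          Wd (n + 1) Q' (ksup (n + 1) N e ((Fin.last n : Fin (n+1)) : ℕ)) 1 ((l : ℕ) + 1) * u l
          = 0 := by
        refine Finset.sum_eq_zero fun l _ => ?_
        have hl := l.isLt
        rw [Wd_vanish (n + 1) Q' ((l : ℕ) + 1) _ 1 le_rfl (by omega)
          (by simp only [Fin.val_last]; unfold ksup; omega)]
        ring
      have hv : Vpos (n + 1) Q' (ksup (n + 1) N e ((Fin.last n : Fin (n+1)) : ℕ)) 1
          = if e = N then 1 else 0 := by
        rw [Vpos_small (n + 1) Q' _ (by simp only [Fin.val_last]; unfold ksup; omega) 1]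
        simp only [Fin.val_last]
        unfold ksup
        split_ifs <;> first | rfl | (exfalso; omega)
      rw [hz, hv]
      ring
    rw [hlast]
    congr 1
    refine Finset.sum_congr rfl fun j _ => ?_
    have hj := j.isLt
    have hsup2 : ksup (n + 1) N e ((j.castSucc : Fin (n+1)) : ℕ)
        = ksup n N (e - 1) (j : ℕ) + 1 := by
      simp only [Fin.coe_castSucc]; unfold ksup; omega
    have hl2 : ∑ l : Fin (n + 1),
        Wd (n + 1) Q' (ksup (n + 1) N e ((j.castSucc : Fin (n+1)) : ℕ)) 1 ((l : ℕ) + 1) * u l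
        = ∑ l : Fin n, Wd n Q' (ksup n N (e - 1) (j : ℕ)) 1 ((l : ℕ) + 1) * u l.castSucc := by
      rw [Fin.sum_univ_castSucc]
      have hzz : Wd (n + 1) Q' (ksup (n + 1) N e ((j.castSucc : Fin (n+1)) : ℕ)) 1
          (((Fin.last n : Fin (n+1)) : ℕ) + 1) * u (Fin.last n) = 0 := by
        rw [Wd_vanish (n + 1) Q' (((Fin.last n : Fin (n+1)) : ℕ) + 1) _ 1 le_rfl (by omega)
          (by simp only [Fin.val_last, Fin.coe_castSucc]; unfold ksup; omega)]
        ring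
      rw [hzz, add_zero]
      refine Finset.sum_congr rfl fun l _ => ?_
      have hl := l.isLt
      rw [hsup2]
      simp only [Fin.coe_castSucc]
      rw [Wd_bridge n Q' (by omega) ((l : ℕ) + 1) (by omega)
        (ksup n N (e - 1) (j : ℕ)) 1 le_rfl (by omega) (by unfold ksup; omega)]
    rw [hl2, hsup2, Vpos_bridge n Q' (by omega) (ksup n N (e - 1) (j : ℕ)) 1 le_rfl (by omega)
      (by unfold ksup; omega)]
  rw [hA, hB]
  by_cases heN : e = N
  · rw [if_pos heN, if_pos heN]; ring
  · rw [if_neg heN, if_neg heN]; ring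

lemma master (n N : ℕ) (hN : 1 ≤ N) (hNn : N ≤ n) (q : ℝ → Fin (n + 1) → ℝ)
    (hq : ContDiff ℝ (⊤ : ℕ∞) q) (e : ℕ) (he1 : N ≤ e) (he2 : e ≤ n) (x : ℝ) :
    EL n (Lag n (-(N : ℤ)) 0 1) (fun y j => q y j.castSucc) ⟨e - 1, by omega⟩ x
      = EL (n + 1) (Lag (n + 1) (-(N : ℤ)) 0 1) q ⟨e, Nat.lt_succ_of_le he2⟩ x
        + (if e = N then 1/2 * deriv (fun y => deriv q y (Fin.last n)) x else 0) := by
  set c : ℝ → Fin n → ℝ := fun y j => q y j.castSucc with hc_def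
  have hc : ContDiff ℝ (⊤ : ℕ∞) c := contDiff_pi.mpr fun j => contDiff_pi.mp hq j.castSucc
  have hqd : Differentiable ℝ q := hq.differentiable (by simp)
  have hcomp : ∀ (y : ℝ) (j : Fin n), deriv c y j = deriv q y j.castSucc := by
    intro y j
    have h1 : HasDerivAt c (fun j : Fin n => deriv q y j.castSucc) y :=
      hasDerivAt_pi.mpr fun j => hasDerivAt_pi.mp (hqd y).hasDerivAt j.castSucc
    rw [h1.deriv]
  have hderc : deriv c x = fun j : Fin n => deriv q x j.castSucc := by
    funext j; exact hcomp x j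
  have hwfun : ∀ j : Fin n, (fun y => deriv c y j) = fun y => deriv q y j.castSucc :=
    fun j => funext fun y => hcomp y j
  rw [EL_formula n N (by omega) c hc ⟨e - 1, by omega⟩ x,
    EL_formula (n + 1) N (by omega) q hq ⟨e, by omega⟩ x]
  have hagree : ∀ a, 1 ≤ a → a ≤ n → extQ n (c x) a = extQ (n + 1) (q x) a := by
    intro a h1 h2
    unfold extQ
    rw [dif_pos ⟨h1, h2⟩, dif_pos ⟨h1, by omega⟩]
    show q x (Fin.castSucc ⟨a - 1, by omega⟩) = q x ⟨a - 1, by omega⟩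
    congr 1
  have hW : ∀ k ee, Wd n (extQ n (c x)) k 1 ee = Wd n (extQ (n + 1) (q x)) k 1 ee :=
    fun k ee => Wd_congr n _ _ ee hagree k 1 le_rfl (by omega)
  have hV : ∀ k, Vpos n (extQ n (c x)) k 1 = Vpos n (extQ (n + 1) (q x)) k 1 :=
    fun k => Vpos_congr n _ _ hagree k 1 le_rfl (by omega)
  simp only [hW, hV, hderc, hwfun]
  exact master_alg n N hN hNn e he1 he2 (extQ (n + 1) (q x)) (deriv q x)
    (fun j => deriv (fun y => deriv q y j) x)

theorem euler_lagrange_stability_in_n (n N : ℕ) (hN : 1 ≤ N) (hNn : N ≤ n)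
    (q : ℝ → Fin (n + 1) → ℝ) (hq : ContDiff ℝ (⊤ : ℕ∞) q) :
    (∀ x : ℝ,
      EL n (Lag n (-(N : ℤ)) 0 1) (fun y j => q y j.castSucc) ⟨N - 1, by omega⟩ x =
        EL (n + 1) (Lag (n + 1) (-(N : ℤ)) 0 1) q ⟨N, by omega⟩ x +
          (1 / 2) * deriv (deriv (fun y => q y (Fin.last n))) x) ∧
    (∀ i : ℕ, (h1 : N + 1 ≤ i) → (h2 : i ≤ n) → ∀ x : ℝ,
      EL n (Lag n (-(N : ℤ)) 0 1) (fun y j => q y j.castSucc) ⟨i - 1, by omega⟩ x =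
        EL (n + 1) (Lag (n + 1) (-(N : ℤ)) 0 1) q ⟨i, by omega⟩ x) := by
  constructor
  · intro x
    have h := master n N hN hNn q hq N le_rfl hNn x
    rw [if_pos rfl] at h
    have hqd : Differentiable ℝ q := hq.differentiable (by simp)
    have hfix : (fun y => deriv q y (Fin.last n)) = deriv (fun y => q y (Fin.last n)) := by
      funext y
      exact ((hasDerivAt_pi.mp (hqd y).hasDerivAt (Fin.last n)).deriv).symm
    rw [hfix] at h
    exact h
  · intro i h1 h2 x
    have h := master n N hN hNn q hq i (by omega) h2 x
    rw [if_neg (by omega), add_zero] at h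
    exact h
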